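/- Lemma 4(b): Let T be a k-uniform supertree on n vertices with m = (n−1)/(k−1) ≥ 2 edges, where k ≥ 3. Then h(T) = Σ_{v} d(v)·log₂ d(v) ≤ m·log₂ m, and equality holds if and only if some vertex of T has degree m (equivalently, T is the hyperstar S^k_{m+1}, in which one vertex lies in all m edges and every other vertex has degree 1). -/

import Mathlib

open Finset

/-- Degree of a vertex in a hypergraph given by its edge set. -/
def hdeg {V : Type*} [DecidableEq V] (E : Finset (Finset V)) (v : V) : ℕ :=
  (E.filter (fun e => v ∈ e)).card

/-- `h(H) = Σ_{v ∈ V} d(v)·log₂ d(v)`. -/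
noncomputable def hval {V : Type*} [Fintype V] [DecidableEq V]
    (E : Finset (Finset V)) : ℝ :=
  ∑ v : V, (hdeg E v : ℝ) * Real.logb 2 (hdeg E v)

/-- The hypergraph is connected: the simple graph on `V` in which `u` is adjacent
to `w` iff `u ≠ w` and some edge contains both is connected. -/
def hconn {V : Type*} (E : Finset (Finset V)) : Prop :=
  (SimpleGraph.fromRel (fun u w => ∃ e ∈ E, u ∈ e ∧ w ∈ e)).Connected

private lemma chord_aux {m x : ℝ} (hm : 2 ≤ m) (hx1 : 1 ≤ x) (hxm : x ≤ m) :
    x * Real.log x ≤ (x - 1) * (m * Real.log m / (m - 1)) := by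
  have hm1 : (0:ℝ) < m - 1 := by linarith
  have h1 : (1:ℝ) ∈ Set.Ici (0:ℝ) := by norm_num
  have h2 : m ∈ Set.Ici (0:ℝ) := by simp only [Set.mem_Ici]; linarith
  have ha : 0 ≤ (m - x)/(m-1) := div_nonneg (by linarith) hm1.le
  have hb : 0 ≤ (x - 1)/(m-1) := div_nonneg (by linarith) hm1.le
  have hab : (m - x)/(m-1) + (x-1)/(m-1) = 1 := by field_simp; ring
  have key := Real.convexOn_mul_log.2 h1 h2 ha hb hab
  have hx : ((m - x)/(m-1)) • (1:ℝ) + ((x-1)/(m-1)) • m = x := by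
    simp only [smul_eq_mul]; field_simp; ring
  rw [hx] at key
  simp only [smul_eq_mul, Real.log_one, mul_one, mul_zero, zero_add] at key
  calc x * Real.log x ≤ (x-1)/(m-1) * (m * Real.log m) := key
    _ = (x - 1) * (m * Real.log m / (m - 1)) := by ring

private lemma chord_strict {m x : ℝ} (hm : 2 ≤ m) (hx1 : 1 < x) (hxm : x < m) :
    x * Real.log x < (x - 1) * (m * Real.log m / (m - 1)) := by
  have hm1 : (0:ℝ) < m - 1 := by linarith
  have h1 : (1:ℝ) ∈ Set.Ici (0:ℝ) := by norm_num
  have h2 : m ∈ Set.Ici (0:ℝ) := by simp only [Set.mem_Ici]; linarith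
  have ha : 0 < (m - x)/(m-1) := div_pos (by linarith) hm1
  have hb : 0 < (x - 1)/(m-1) := div_pos (by linarith) hm1
  have hab : (m - x)/(m-1) + (x-1)/(m-1) = 1 := by field_simp; ring
  have key := Real.strictConvexOn_mul_log.2 h1 h2 (by intro h; rw [h] at hx1; linarith) ha hb hab
  have hx : ((m - x)/(m-1)) • (1:ℝ) + ((x-1)/(m-1)) • m = x := by
    simp only [smul_eq_mul]; field_simp; ring
  rw [hx] at key
  simp only [smul_eq_mul, Real.log_one, mul_one, mul_zero, zero_add] at key
  calc x * Real.log x < (x-1)/(m-1) * (m * Real.log m) := key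
    _ = (x - 1) * (m * Real.log m / (m - 1)) := by ring

/-- Lemma 4(b): for a k-uniform supertree with `m ≥ 2` edges, `h(T) ≤ m·log₂ m`,
with equality iff some vertex has degree `m` (i.e. `T` is the hyperstar). -/
theorem stmt_6 {V : Type*} [Fintype V] [DecidableEq V] (k n m : ℕ) (hk : 3 ≤ k)
    (E : Finset (Finset V)) (hunif : ∀ e ∈ E, e.card = k)
    (hn : Fintype.card V = n) (hm : E.card = m) (hm2 : 2 ≤ m)
    (hc : hconn E) (hacyc : m * (k - 1) = n - 1) :
    hval E ≤ (m : ℝ) * Real.logb 2 m ∧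
      (hval E = (m : ℝ) * Real.logb 2 m ↔ ∃ v : V, hdeg E v = m) := by
  -- basic numeric facts
  have hk1 : 2 ≤ k - 1 := by omega
  have h4 : 4 ≤ m * (k - 1) := Nat.mul_le_mul hm2 hk1
  have hn5 : 5 ≤ n := by omega
  have hnk : n = m * (k - 1) + 1 := by omega
  -- every vertex has degree ≤ m
  have hdle : ∀ v : V, hdeg E v ≤ m := by
    intro v; rw [← hm]; exact Finset.card_filter_le E _
  -- sum of degrees = m * k
  have hsum : ∑ v : V, hdeg E v = m * k := by
    have h1 : ∑ v : V, hdeg E v = ∑ e ∈ E, e.card := by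
      simp only [hdeg, Finset.card_filter]
      rw [Finset.sum_comm]
      refine Finset.sum_congr rfl fun e _ => ?_
      rw [← Finset.card_filter]
      congr 1
      ext x
      simp
    rw [h1]
    rw [Finset.sum_congr rfl hunif, Finset.sum_const, hm, smul_eq_mul]
  -- every vertex has degree ≥ 1
  have hd1 : ∀ v : V, 1 ≤ hdeg E v := by
    intro v
    obtain ⟨w, hw⟩ := Fintype.exists_ne_of_one_lt_card (by omega) v
    obtain ⟨p⟩ := hc.preconnected v w
    cases p with
    | nil => exact absurd rfl hw
    | cons h _ =>
      rw [SimpleGraph.fromRel_adj] at h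
      obtain ⟨-, h | h⟩ := h
      · obtain ⟨e, he, hve, -⟩ := h
        exact Finset.card_pos.2 ⟨e, Finset.mem_filter.2 ⟨he, hve⟩⟩
      · obtain ⟨e, he, -, hve⟩ := h
        exact Finset.card_pos.2 ⟨e, Finset.mem_filter.2 ⟨he, hve⟩⟩
  -- real versions
  have hmR : (2:ℝ) ≤ (m:ℝ) := by exact_mod_cast hm2
  have hm1R : (0:ℝ) < (m:ℝ) - 1 := by linarith
  have hnR : (n:ℝ) = m * k - m + 1 := by
    have : (n:ℝ) = (m:ℝ) * ((k:ℝ) - 1) + 1 := by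
      rw [hnk]; push_cast [Nat.cast_sub (by omega : 1 ≤ k)]; ring
    rw [this]; ring
  have hsub : ∑ v : V, ((hdeg E v : ℝ) - 1) = (m:ℝ) - 1 := by
    rw [Finset.sum_sub_distrib, Finset.sum_const, Finset.card_univ, hn]
    have : ∑ v : V, ((hdeg E v : ℝ)) = (m:ℝ) * k := by exact_mod_cast hsum
    rw [this]; rw [nsmul_eq_mul, mul_one]; linarith [hnR]
  set c : ℝ := (m:ℝ) * Real.log m / ((m:ℝ) - 1) with hc_def
  have hboundsum : ∑ v : V, ((hdeg E v:ℝ) - 1) * c = (m:ℝ) * Real.log m := by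
    rw [← Finset.sum_mul, hsub, hc_def]
    field_simp
  have hterm : ∀ v : V, (hdeg E v:ℝ) * Real.log (hdeg E v) ≤ ((hdeg E v:ℝ) - 1) * c :=
    fun v => chord_aux hmR (by exact_mod_cast hd1 v) (by exact_mod_cast hdle v)
  -- key inequality at the level of `Real.log`
  have hineq : ∑ v : V, (hdeg E v:ℝ) * Real.log (hdeg E v) ≤ (m:ℝ) * Real.log m := by
    rw [← hboundsum]; exact Finset.sum_le_sum fun v _ => hterm v
  -- equality iff at log level
  have hiff : (∑ v : V, (hdeg E v:ℝ) * Real.log (hdeg E v) = (m:ℝ) * Real.log m) ↔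
      ∃ v : V, hdeg E v = m := by
    constructor
    · intro h
      rw [← hboundsum] at h
      have hall := (Finset.sum_eq_sum_iff_of_le (fun v _ => hterm v)).1 h
      -- there is a vertex of degree ≥ 2
      have hex : ∃ v : V, 2 ≤ hdeg E v := by
        by_contra hno
        push_neg at hno
        have h1 : ∀ v : V, hdeg E v = 1 := fun v => by have := hd1 v; have := hno v; omega
        have : ∑ v : V, hdeg E v = n := by
          rw [Finset.sum_congr rfl fun v _ => h1 v, Finset.sum_const, Finset.card_univ, hn,
            smul_eq_mul, mul_one]
        rw [hsum] at this
        have hmk : m * k = m * (k - 1) + m := by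
          have hkk : k - 1 + 1 = k := by omega
          calc m * k = m * ((k - 1) + 1) := by rw [hkk]
            _ = m * (k - 1) + m := by ring
        omega
      obtain ⟨v, hv⟩ := hex
      refine ⟨v, ?_⟩
      by_contra hne
      have hvm : hdeg E v < m := lt_of_le_of_ne (hdle v) hne
      have := chord_strict hmR (by exact_mod_cast hv : (1:ℝ) < (hdeg E v:ℝ))
        (by exact_mod_cast hvm)
      have heqv := hall v (Finset.mem_univ v)
      rw [← hc_def] at this
      linarith [heqv, this]
    · rintro ⟨v, hv⟩
      -- all other vertices have degree 1
      have hothers : ∀ w : V, w ≠ v → hdeg E w = 1 := by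
        have hsplit : hdeg E v + ∑ w ∈ Finset.univ.erase v, hdeg E w = m * k := by
          rw [Finset.add_sum_erase _ _ (Finset.mem_univ v)]; exact hsum
        have hrest : ∑ w ∈ Finset.univ.erase v, hdeg E w = m * (k - 1) := by
          have hmk : m * k = m * (k - 1) + m := by
            have hkk : k - 1 + 1 = k := by omega
            calc m * k = m * ((k - 1) + 1) := by rw [hkk]
              _ = m * (k - 1) + m := by ring
          omega
        have hcard : (Finset.univ.erase v).card = m * (k - 1) := by
          rw [Finset.card_erase_of_mem (Finset.mem_univ v), Finset.card_univ, hn]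
          omega
        have hle : ∀ w ∈ Finset.univ.erase v, 1 ≤ hdeg E w := fun w _ => hd1 w
        have hsums : ∑ w ∈ Finset.univ.erase v, (1:ℕ) = ∑ w ∈ Finset.univ.erase v, hdeg E w := by
          rw [Finset.sum_const, smul_eq_mul, mul_one, hcard, hrest]
        have := (Finset.sum_eq_sum_iff_of_le hle).1 hsums
        intro w hw
        exact ((this w (Finset.mem_erase.2 ⟨hw, Finset.mem_univ w⟩))).symm
      rw [Finset.sum_eq_single_of_mem v (Finset.mem_univ v)
        (fun b _ hb => by rw [hothers b hb]; simp), hv]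
  -- convert to `logb 2`
  have hlog2 : (0:ℝ) < Real.log 2 := Real.log_pos (by norm_num)
  have hval_eq : hval E = (∑ v : V, (hdeg E v:ℝ) * Real.log (hdeg E v)) / Real.log 2 := by
    rw [hval, Finset.sum_div]
    refine Finset.sum_congr rfl fun v _ => ?_
    rw [Real.logb]; ring
  have hrhs : (m:ℝ) * Real.logb 2 m = ((m:ℝ) * Real.log m) / Real.log 2 := by
    rw [Real.logb]; ring
  constructor
  · rw [hval_eq, hrhs]
    exact (div_le_div_iff_of_pos_right hlog2).2 hineq
  · rw [hval_eq, hrhs, div_eq_div_iff hlog2.ne' hlog2.ne' |>.trans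
      (mul_left_inj' hlog2.ne')]
    exact hiff
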